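/- Let n be an odd prime and m = (n−1)/2. Then the real numbers sin(π/n), sin(2π/n), …, sin(mπ/n) are linearly independent over ℚ. -/

import Mathlib

open Complex Polynomial Finset in
/-- For an odd prime `n` and `m = (n-1)/2`, the real numbers
`sin (π/n), sin (2π/n), …, sin (mπ/n)` are linearly independent over `ℚ`. -/
theorem sin_linearIndependent_of_odd_prime (n : ℕ) (hp : n.Prime) (hodd : Odd n) :
    LinearIndependent ℚ
      (fun j : Fin ((n - 1) / 2) => Real.sin ((j.1 + 1) * Real.pi / n)) := by
  have hn : n ≠ 0 := hp.ne_zero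
  have hn2 : 2 ≤ n := hp.two_le
  have hoddm : n % 2 = 1 := Nat.odd_iff.mp hodd
  have hn3 : 3 ≤ n := by
    rcases Nat.lt_or_ge n 3 with h | h
    · interval_cases n <;> omega
    · exact h
  set m : ℕ := (n - 1) / 2 with hmdef
  have hm : n = 2 * m + 1 := by omega
  set a : ℕ := (n + 1) / 2 with hadef
  have ha : 2 * a = n + 1 := by omega
  have han : 0 < a ∧ a < n := by omega
  -- the primitive root
  set ζ : ℂ := Complex.exp (2 * Real.pi * I / n) with hζdef
  have hζ : IsPrimitiveRoot ζ n := Complex.isPrimitiveRoot_exp n hn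
  have hζ0 : ζ ≠ 0 := Complex.exp_ne_zero _
  have hζ1 : ζ ^ n = 1 := hζ.pow_eq_one
  -- linear independence of ζ, ζ², …, ζ^(n-1)
  have hdeg : (minpoly ℚ ζ).natDegree = n - 1 := by
    rw [← Polynomial.cyclotomic_eq_minpoly_rat hζ (Nat.pos_of_ne_zero hn),
      Polynomial.natDegree_cyclotomic, Nat.totient_prime hp]
  have li0 : LinearIndependent ℚ (fun i : Fin (n - 1) => ζ ^ (i : ℕ)) := by
    have := linearIndependent_pow (K := ℚ) ζ
    rwa [hdeg] at this
  have li : LinearIndependent ℚ (fun i : Fin (n - 1) => ζ ^ ((i : ℕ) + 1)) := by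
    have := li0.map' (LinearMap.mulLeft ℚ ζ)
      (LinearMap.ker_eq_bot.mpr (mul_right_injective₀ hζ0))
    simpa [Function.comp_def, LinearMap.mulLeft_apply, pow_succ'] using this
  -- the exponent function
  set b : ℕ → ℕ := fun K => (a * K) % n with hbdef
  have hblt : ∀ K, b K < n := fun K => Nat.mod_lt _ (by omega)
  have hbpos : ∀ K, 1 ≤ K → K < n → 0 < b K := by
    intro K hK1 hKn
    rcases Nat.eq_zero_or_pos (b K) with h | h
    · exfalso
      have hb : a * K % n = 0 := h
      have hdvd : n ∣ a * K := Nat.dvd_of_mod_eq_zero hb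
      rcases (Nat.Prime.dvd_mul hp).mp hdvd with h' | h'
      · exact absurd (Nat.le_of_dvd han.1 h') (by omega)
      · exact absurd (Nat.le_of_dvd (by omega) h') (by omega)
    · exact h
  -- injectivity facts
  have hKmod : ∀ K : ℕ, (n + 1) * K % n = K % n := by
    intro K
    rw [show (n + 1) * K = K + K * n by ring, Nat.add_mul_mod_self_right]
  have hb_inj : ∀ K K', 1 ≤ K → K < n → 1 ≤ K' → K' < n → b K = b K' → K = K' := by
    intro K K' h1 h2 h3 h4 h
    have h' : a * K % n = a * K' % n := h
    have e2 : ((n + 1) * K) % n = ((n + 1) * K') % n := by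
      rw [← ha, mul_assoc, mul_assoc, Nat.mul_mod, h', ← Nat.mul_mod]
    rw [hKmod K, hKmod K'] at e2
    rwa [Nat.mod_eq_of_lt h2, Nat.mod_eq_of_lt h4] at e2
  have hb_ne : ∀ K K', 1 ≤ K → K ≤ m → 1 ≤ K' → K' ≤ m → b K + b K' ≠ n := by
    intro K K' h1 h2 h3 h4 h
    have h' : a * K % n + a * K' % n = n := h
    have hmod : (a * K + a * K') % n = 0 := by
      rw [Nat.add_mod, h', Nat.mod_self]
    have hdvd : n ∣ a * (K + K') := by
      rw [Nat.mul_add]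
      exact Nat.dvd_of_mod_eq_zero hmod
    rcases (Nat.Prime.dvd_mul hp).mp hdvd with h' | h'
    · exact absurd (Nat.le_of_dvd han.1 h') (by omega)
    · exact absurd (Nat.le_of_dvd (by omega) h') (by omega)
  -- sine values in terms of ζ
  have hsin : ∀ K : ℕ, 1 ≤ K → K < n → Complex.sin ((K : ℂ) * Real.pi / n) =
      (-1) ^ K * (ζ ^ (n - b K) - ζ ^ (b K)) * I / 2 := by
    intro K hK1 hKn
    have hnC : (n : ℂ) ≠ 0 := Nat.cast_ne_zero.mpr hn
    have key : Complex.exp ((K : ℂ) * Real.pi / n * I) = (-1) ^ K * ζ ^ (b K) := by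
      have h1 : ζ ^ (a * K) = Complex.exp ((a * K : ℕ) * (2 * Real.pi * I / n)) := by
        rw [Complex.exp_nat_mul]
      have h2 : ((a * K : ℕ) : ℂ) * (2 * Real.pi * I / n) =
          K * (Real.pi * I) + (K : ℂ) * Real.pi / n * I := by
        have h3 : (2 * (a * K) : ℕ) = n * K + K := by
          rw [show 2 * (a * K) = (2 * a) * K by ring, ha]; ring
        have h4 : ((2 * (a * K) : ℕ) : ℂ) = ((n * K + K : ℕ) : ℂ) := by rw [h3]
        push_cast at h4
        field_simp
        ring_nf
        ring_nf at h4
        push_cast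
        linear_combination h4
      have h5 : ζ ^ (a * K) = (-1) ^ K * Complex.exp ((K : ℂ) * Real.pi / n * I) := by
        rw [h1, h2, Complex.exp_add, Complex.exp_nat_mul, Complex.exp_pi_mul_I]
      have h6 : ζ ^ (a * K) = ζ ^ (b K) := pow_eq_pow_mod _ hζ1
      have h7 : ((-1 : ℂ) ^ K) * ((-1 : ℂ) ^ K) = 1 := by
        rw [← pow_add, ← two_mul, pow_mul]; norm_num
      calc Complex.exp ((K : ℂ) * Real.pi / n * I)
          = ((-1 : ℂ) ^ K * ((-1 : ℂ) ^ K * Complex.exp ((K : ℂ) * Real.pi / n * I))) := by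
            rw [← mul_assoc, h7, one_mul]
        _ = (-1) ^ K * ζ ^ (b K) := by rw [← h5, h6]
    have hinv : (ζ ^ (b K))⁻¹ = ζ ^ (n - b K) := by
      rw [inv_eq_of_mul_eq_one_right]
      rw [← pow_add, show b K + (n - b K) = n by have := hblt K; omega, hζ1]
    have key2 : Complex.exp (-((K : ℂ) * Real.pi / n) * I) = (-1) ^ K * ζ ^ (n - b K) := by
      rw [neg_mul, Complex.exp_neg, key, mul_inv, hinv]
      congr 1
      rw [← inv_pow, inv_neg, inv_one]
    rw [Complex.sin, key, key2]
    ring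
  -- the index functions into Fin (n-1)
  have hKlt : ∀ j : Fin m, j.1 + 1 < n := fun j => by have := j.2; omega
  have hK1 : ∀ j : Fin m, 1 ≤ j.1 + 1 := fun _ => by omega
  have hbfacts : ∀ j : Fin m, 1 ≤ b (j.1 + 1) ∧ b (j.1 + 1) < n :=
    fun j => ⟨hbpos _ (hK1 j) (hKlt j), hblt _⟩
  set e1 : Fin m → Fin (n - 1) := fun j =>
    ⟨b (j.1 + 1) - 1, by have := hbfacts j; omega⟩ with he1def
  set e2 : Fin m → Fin (n - 1) := fun j =>
    ⟨n - b (j.1 + 1) - 1, by have := hbfacts j; omega⟩ with he2def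
  set u : Fin (n - 1) → ℂ := fun i => ζ ^ ((i : ℕ) + 1) with hudef
  have hu1 : ∀ j, u (e1 j) = ζ ^ (b (j.1 + 1)) := by
    intro j
    simp only [hudef, he1def]
    congr 1
    have := hbfacts j
    omega
  have hu2 : ∀ j, u (e2 j) = ζ ^ (n - b (j.1 + 1)) := by
    intro j
    simp only [hudef, he2def]
    congr 1
    have := hbfacts j
    omega
  -- main argument
  rw [Fintype.linearIndependent_iff]
  intro g hg
  set σ : Fin m → ℚ := fun j => g j * (-1) ^ (j.1 + 1) with hσdef
  -- complexified relation
  have key : ∀ j : Fin m, ((g j • Real.sin ((j.1 + 1) * Real.pi / n) : ℝ) : ℂ) =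
      ((σ j : ℂ) * (u (e2 j) - u (e1 j))) * I / 2 := by
    intro j
    rw [Rat.smul_def]
    have hs := hsin (j.1 + 1) (hK1 j) (hKlt j)
    push_cast at hs ⊢
    rw [hs, hu1, hu2, hσdef]
    push_cast
    ring
  have hgC : ∑ j : Fin m, ((σ j : ℂ) * (u (e2 j) - u (e1 j))) * I / 2 = 0 := by
    calc ∑ j : Fin m, ((σ j : ℂ) * (u (e2 j) - u (e1 j))) * I / 2
        = ((∑ j : Fin m, g j • Real.sin ((j.1 + 1) * Real.pi / n) : ℝ) : ℂ) := by
          rw [Complex.ofReal_sum]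
          exact Finset.sum_congr rfl fun j _ => (key j).symm
      _ = 0 := by rw [hg]; simp
  have hz : ∑ j : Fin m, (σ j : ℂ) * (u (e2 j) - u (e1 j)) = 0 := by
    have hI : (I / 2 : ℂ) ≠ 0 := by simp [Complex.I_ne_zero]
    have : (∑ j : Fin m, (σ j : ℂ) * (u (e2 j) - u (e1 j))) * (I / 2) = 0 := by
      rw [Finset.sum_mul, ← hgC]
      exact Finset.sum_congr rfl fun j _ => by ring
    exact (mul_eq_zero.mp this).resolve_right hI
  -- coefficient function on Fin (n-1)
  set c : Fin (n - 1) → ℚ := fun i =>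
    (∑ j : Fin m, if e2 j = i then σ j else 0) - (∑ j : Fin m, if e1 j = i then σ j else 0)
    with hcdef
  have hc : ∑ i : Fin (n - 1), c i • (ζ ^ ((i : ℕ) + 1)) = 0 := by
    have h1 : ∀ (e : Fin m → Fin (n - 1)),
        ∑ i : Fin (n - 1), (∑ j : Fin m, if e j = i then σ j else 0) • u i
          = ∑ j : Fin m, σ j • u (e j) := by
      intro e
      simp only [Finset.sum_smul, ite_smul, zero_smul]
      rw [Finset.sum_comm]
      refine Finset.sum_congr rfl fun j _ => ?_
      simp [Finset.sum_ite_eq]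
    have h2 : ∑ i : Fin (n - 1), c i • u i
        = ∑ j : Fin m, σ j • u (e2 j) - ∑ j : Fin m, σ j • u (e1 j) := by
      simp only [hcdef, sub_smul, Finset.sum_smul, ite_smul, zero_smul]
      rw [Finset.sum_sub_distrib]
      congr 1
      · have := h1 e2
        simp only [Finset.sum_smul, ite_smul, zero_smul] at this
        exact this
      · have := h1 e1
        simp only [Finset.sum_smul, ite_smul, zero_smul] at this
        exact this
    show ∑ i : Fin (n - 1), c i • u i = 0
    rw [h2, ← Finset.sum_sub_distrib]
    have : ∀ j : Fin m, σ j • u (e2 j) - σ j • u (e1 j) = (σ j : ℂ) * (u (e2 j) - u (e1 j)) := by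
      intro j
      rw [Rat.smul_def, Rat.smul_def]
      ring
    rw [Finset.sum_congr rfl fun j _ => this j, hz]
  have hc0 : ∀ i, c i = 0 := Fintype.linearIndependent_iff.mp li c hc
  -- extract coefficients
  intro j
  have h1 : ∑ j' : Fin m, (if e2 j' = e1 j then σ j' else 0) = 0 := by
    refine Finset.sum_eq_zero fun j' _ => ?_
    have hne : e2 j' ≠ e1 j := by
      intro h
      have h' : n - b (j'.1 + 1) - 1 = b (j.1 + 1) - 1 := congrArg Fin.val h
      have hf1 := hbfacts j
      have hf2 := hbfacts j'
      have : b (j.1 + 1) + b (j'.1 + 1) = n := by omega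
      exact hb_ne (j.1 + 1) (j'.1 + 1) (hK1 j) (by have := j.2; omega)
        (hK1 j') (by have := j'.2; omega) this
    simp [hne]
  have h2 : ∑ j' : Fin m, (if e1 j' = e1 j then σ j' else 0) = σ j := by
    rw [Finset.sum_eq_single j]
    · simp
    · intro j' _ hne
      have : e1 j' ≠ e1 j := by
        intro h
        have h' : b (j'.1 + 1) - 1 = b (j.1 + 1) - 1 := congrArg Fin.val h
        have hf1 := hbfacts j
        have hf2 := hbfacts j'
        have hbb : b (j'.1 + 1) = b (j.1 + 1) := by omega
        have := hb_inj (j'.1 + 1) (j.1 + 1) (hK1 j') (hKlt j') (hK1 j) (hKlt j) hbb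
        exact hne (Fin.ext (by omega))
      simp [this]
    · simp
  have hcj := hc0 (e1 j)
  rw [hcdef] at hcj
  simp only at hcj
  rw [h1, h2] at hcj
  have hσ0 : σ j = 0 := by linarith
  have : g j * (-1 : ℚ) ^ (j.1 + 1) = 0 := hσ0
  rcases mul_eq_zero.mp this with h | h
  · exact h
  · exact absurd h (pow_ne_zero _ (by norm_num))
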